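/- In the Δ-setup, for each two committee positions I1 and I2 with |I1 ∩ I2| = s, it holds that Δ_{I2,I1} = −Δ_{I1,I2}. -/

import Mathlib

open Finset

abbrev Vote (A : Type*) [Fintype A] := A ≃ Fin (Fintype.card A)

structure DecisionRule (A : Type*) [Fintype A] [DecidableEq A] (k : ℕ) (R : Type*) where
  F : (Vote A → R) → {C : Finset A // C.card = k} → {C : Finset A // C.card = k} → ℤ
  antisymm : ∀ P C1 C2, F P C1 C2 = - F P C2 C1
  mem_range : ∀ P C1 C2, F P C1 C2 = -1 ∨ F P C1 C2 = 0 ∨ F P C1 C2 = 1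

abbrev Committee (A : Type*) (k : ℕ) := {C : Finset A // C.card = k}

section Defs

variable {A : Type*} [Fintype A] [DecidableEq A] {k : ℕ}

/-- The set of positions occupied by the members of `C` in vote `π`. -/
def Vote.pos (π : Vote A) (C : Finset A) : Finset (Fin (Fintype.card A)) := C.image π

/-- The action of a candidate permutation on a vote. -/
def permVote (σ : Equiv.Perm A) (π : Vote A) : Vote A := σ.symm.trans π

/-- The action of a candidate permutation on a voting situation. -/
def permSitu {R : Type*} (σ : Equiv.Perm A) (P : Vote A → R) : Vote A → R :=
  fun π => P (σ.trans π)

/-- The action of a candidate permutation on a committee. -/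
def permComm (σ : Equiv.Perm A) (C : Committee A k) : Committee A k :=
  ⟨C.1.image σ, by rw [Finset.card_image_of_injective _ σ.injective]; exact C.2⟩

/-- Committee position `I` (weakly) dominates committee position `J`:
listing both increasingly, each element of `I` is at most the corresponding element of `J`. -/
def Dominates {m : ℕ} (I J : Finset (Fin m)) : Prop :=
  List.Forall₂ (· ≤ ·) (I.sort (· ≤ ·)) (J.sort (· ≤ ·))

namespace DecisionRule

variable {R : Type*} [AddCommMonoid R]

def Neutral (f : DecisionRule A k R) : Prop :=
  ∀ (σ : Equiv.Perm A) (P : Vote A → R) (C1 C2 : Committee A k),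
    f.F (permSitu σ P) (permComm σ C1) (permComm σ C2) = f.F P C1 C2

def Consistent (f : DecisionRule A k R) : Prop :=
  ∀ (P Q : Vote A → R) (C1 C2 : Committee A k),
    (f.F P C1 C2 = 1 → 0 ≤ f.F Q C1 C2 → f.F (P + Q) C1 C2 = 1) ∧
    (0 ≤ f.F P C1 C2 → 0 ≤ f.F Q C1 C2 → 0 ≤ f.F (P + Q) C1 C2)

def IsContinuous (f : DecisionRule A k R) : Prop :=
  ∀ (P1 P2 : Vote A → R) (C1 C2 : Committee A k),
    f.F P2 C1 C2 = 1 → ∃ n : ℕ, f.F (P1 + n • P2) C1 C2 = 1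

def Transitive (f : DecisionRule A k R) : Prop :=
  ∀ (P : Vote A → R) (C1 C2 C3 : Committee A k),
    0 ≤ f.F P C1 C2 → 0 ≤ f.F P C2 C3 → 0 ≤ f.F P C1 C3

end DecisionRule

def DecisionRule.CommitteeDominance {A : Type*} [Fintype A] [DecidableEq A] {k : ℕ}
    {R : Type*} [CommSemiring R] [PartialOrder R] [IsOrderedRing R] (f : DecisionRule A k R) : Prop :=
  ∀ (P : Vote A → R) (C1 C2 : Committee A k), (∀ π, 0 ≤ P π) →
    (∀ π, 0 < P π → Dominates (π.pos C1.1) (π.pos C2.1)) → 0 ≤ f.F P C1 C2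

/-- The `λ`-score of a committee `C` in an integer voting situation `P`. -/
noncomputable def scoreN (lam : Finset (Fin (Fintype.card A)) → ℝ) (C : Finset A)
    (P : Vote A → ℕ) : ℝ :=
  ∑ π : Vote A, (P π : ℝ) * lam (π.pos C)

end Defs

/-- The voting situation consisting of a single copy of the vote `π`. -/
def singleSitu {A : Type*} [Fintype A] [DecidableEq A] (π : Vote A) : Vote A → ℕ :=
  fun u => if u = π then 1 else 0

/-- The value `Δ_{I1,I2}` of the Δ-setup, relative to a rule `f`, committees `C1, C2`,
a family `w` of distinguished votes (where `w J1 J2` places `C1` on positions `J1` and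
`C2` on positions `J2`), and the reference positions `I1s, I2s`. -/
noncomputable def Delta {A : Type*} [Fintype A] [DecidableEq A] {k : ℕ}
    (f : DecisionRule A k ℕ) (C1 C2 : Committee A k)
    (w : Finset (Fin (Fintype.card A)) → Finset (Fin (Fintype.card A)) → Vote A)
    (I1s I2s : Finset (Fin (Fintype.card A)))
    (I1 I2 : Finset (Fin (Fintype.card A))) : ℝ :=
  if f.F (singleSitu (w I1 I2)) C1 C2 = 1 then
    sSup {q : ℝ | ∃ x y : ℕ, 0 < x ∧ 0 < y ∧ q = (y : ℝ) / (x : ℝ) ∧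
      f.F (x • singleSitu (w I2 I1) + y • singleSitu (w I1s I2s)) C2 C1 = 1}
  else if f.F (singleSitu (w I1 I2)) C1 C2 = -1 then
    - sInf {q : ℝ | ∃ x y : ℕ, 0 < x ∧ 0 < y ∧ q = (y : ℝ) / (x : ℝ) ∧
      f.F (x • singleSitu (w I2 I1) + y • singleSitu (w I2s I1s)) C2 C1 = 1}
  else 0

set_option linter.unusedSectionVars false

section Aux
variable {A : Type*} [Fintype A] [DecidableEq A] {k : ℕ}

lemma permSitu_single (σ : Equiv.Perm A) (u : Vote A) :
    permSitu σ (singleSitu u) = singleSitu (permVote σ u) := by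
  funext π
  simp only [permSitu, singleSitu, permVote]
  congr 1
  simp only [eq_iff_iff]
  constructor
  · intro h; rw [← h]; ext a; simp
  · intro h; rw [h]; ext a; simp

lemma permSitu_add (σ : Equiv.Perm A) (P Q : Vote A → ℕ) :
    permSitu σ (P + Q) = permSitu σ P + permSitu σ Q := rfl

lemma permSitu_smul (σ : Equiv.Perm A) (n : ℕ) (P : Vote A → ℕ) :
    permSitu σ (n • P) = n • permSitu σ P := rfl

lemma pos_permVote (σ : Equiv.Perm A) (u : Vote A) (C : Finset A) :
    (permVote σ u).pos C = u.pos (C.image ⇑σ.symm) := by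
  simp only [Vote.pos, permVote, Equiv.coe_trans, Finset.image_image]

lemma image_symm_eq {α β : Type*} [DecidableEq α] [DecidableEq β] {C : Finset α}
    {D : Finset β} (σ : α ≃ β) (h : C.image ⇑σ = D) :
    D.image ⇑σ.symm = C := by
  rw [← h, Finset.image_image]; simp

lemma permComm_eq (σ : Equiv.Perm A) (C D : Committee A k) (h : C.1.image ⇑σ = D.1) :
    permComm σ C = D := Subtype.ext h

lemma F_sum_one (f : DecisionRule A k ℕ) (hcons : f.Consistent)
    {ι : Type*} (s : Finset ι) (P : ι → Vote A → ℕ) (C1 C2 : Committee A k)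
    (hs : s.Nonempty) (h : ∀ i ∈ s, f.F (P i) C1 C2 = 1) :
    f.F (∑ i ∈ s, P i) C1 C2 = 1 := by
  induction s using Finset.cons_induction with
  | empty => exact absurd hs (by simp)
  | cons a s ha ih =>
    rw [Finset.sum_cons]
    rcases s.eq_empty_or_nonempty with rfl | hne
    · simpa using h a (Finset.mem_cons_self a _)
    · refine (hcons _ _ C1 C2).1 (h a (Finset.mem_cons_self a _)) ?_
      rw [ih hne (fun i hi => h i (Finset.mem_cons_of_mem hi))]
      norm_num

lemma F_sum_nonneg (f : DecisionRule A k ℕ) (hcons : f.Consistent)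
    {ι : Type*} (s : Finset ι) (P : ι → Vote A → ℕ) (C1 C2 : Committee A k)
    (hs : s.Nonempty) (h : ∀ i ∈ s, 0 ≤ f.F (P i) C1 C2) :
    0 ≤ f.F (∑ i ∈ s, P i) C1 C2 := by
  induction s using Finset.cons_induction with
  | empty => exact absurd hs (by simp)
  | cons a s ha ih =>
    rw [Finset.sum_cons]
    rcases s.eq_empty_or_nonempty with rfl | hne
    · simpa using h a (Finset.mem_cons_self a _)
    · exact (hcons _ _ C1 C2).2 (h a (Finset.mem_cons_self a _))
        (ih hne (fun i hi => h i (Finset.mem_cons_of_mem hi)))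

lemma F_smul_one (f : DecisionRule A k ℕ) (hcons : f.Consistent)
    (P : Vote A → ℕ) (C1 C2 : Committee A k) (n : ℕ) (hn : 0 < n)
    (h : f.F P C1 C2 = 1) : f.F (n • P) C1 C2 = 1 := by
  induction n with
  | zero => omega
  | succ m ih =>
    rcases Nat.eq_zero_or_pos m with rfl | hm
    · simpa using h
    · rw [succ_nsmul]
      exact (hcons _ _ C1 C2).1 (ih hm) (by rw [h]; norm_num)

end Aux
section SymSection
variable {A : Type*} [Fintype A] [DecidableEq A] {k : ℕ}

/-- The setwise stabilizer of the two committees. -/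
noncomputable def stab (C1 C2 : Committee A k) : Finset (Equiv.Perm A) := by
  classical
  exact Finset.univ.filter (fun σ => C1.1.image ⇑σ = C1.1 ∧ C2.1.image ⇑σ = C2.1)

lemma mem_stab {C1 C2 : Committee A k} {σ : Equiv.Perm A} :
    σ ∈ stab C1 C2 ↔ C1.1.image ⇑σ = C1.1 ∧ C2.1.image ⇑σ = C2.1 := by
  classical
  simp [stab]

lemma one_mem_stab (C1 C2 : Committee A k) : (1 : Equiv.Perm A) ∈ stab C1 C2 := by
  rw [mem_stab]; constructor <;> simp

/-- Symmetrization of a voting situation over the committee stabilizer. -/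
noncomputable def symP (C1 C2 : Committee A k) (P : Vote A → ℕ) : Vote A → ℕ :=
  ∑ σ ∈ stab C1 C2, permSitu σ P

lemma symP_add (C1 C2 : Committee A k) (P Q : Vote A → ℕ) :
    symP C1 C2 (P + Q) = symP C1 C2 P + symP C1 C2 Q := by
  unfold symP
  rw [← Finset.sum_add_distrib]
  exact Finset.sum_congr rfl (fun σ _ => permSitu_add σ P Q)

lemma symP_smul (C1 C2 : Committee A k) (n : ℕ) (P : Vote A → ℕ) :
    symP C1 C2 (n • P) = n • symP C1 C2 P := by
  unfold symP
  rw [Finset.smul_sum]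
  exact Finset.sum_congr rfl (fun σ _ => permSitu_smul σ n P)

lemma image_cancel_iff (u π : Vote A) (C : Finset A) :
    C.image ⇑(u.trans π.symm) = C ↔ C.image ⇑u = C.image ⇑π := by
  have h1 : C.image ⇑(u.trans π.symm) = (C.image ⇑u).image ⇑π.symm := by
    rw [Finset.image_image]; rfl
  have h2 : (C.image ⇑π).image ⇑π.symm = C := by
    rw [Finset.image_image]; simp
  rw [h1]
  constructor
  · intro h
    have := congrArg (Finset.image ⇑π) h
    rwa [Finset.image_image, (show ⇑π ∘ ⇑π.symm = id by ext a; simp),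
      Finset.image_id] at this
  · intro h; rw [h]; exact h2

lemma symP_single (C1 C2 : Committee A k) (u : Vote A) :
    symP C1 C2 (singleSitu u) =
      fun π : Vote A =>
        if u.pos C1.1 = Vote.pos π C1.1 ∧ u.pos C2.1 = Vote.pos π C2.1 then 1 else 0 := by
  classical
  funext π
  have happ : symP C1 C2 (singleSitu u) π = ∑ σ ∈ stab C1 C2, singleSitu u (σ.trans π) := by
    unfold symP
    rw [Finset.sum_apply]
    rfl
  rw [happ]
  have hcond : ∀ σ : Equiv.Perm A, (σ.trans π = u) ↔ σ = u.trans π.symm := by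
    intro σ
    constructor
    · intro h; rw [← h]; ext a; simp
    · intro h; rw [h]; ext a; simp
  have hterm : ∀ σ : Equiv.Perm A, singleSitu u (σ.trans π)
      = if σ = u.trans π.symm then 1 else 0 := by
    intro σ
    simp only [singleSitu, hcond σ]
  rw [Finset.sum_congr rfl (fun σ _ => hterm σ), Finset.sum_ite_eq' (stab C1 C2)]
  congr 1
  rw [eq_iff_iff, mem_stab, image_cancel_iff, image_cancel_iff]
  rfl

end SymSection
section Inv
variable {A : Type*} [Fintype A] [DecidableEq A] {k : ℕ}

lemma F_symP (f : DecisionRule A k ℕ) (hneu : f.Neutral) (hcons : f.Consistent)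
    (C1 C2 : Committee A k) (P : Vote A → ℕ) :
    f.F (symP C1 C2 P) C1 C2 = f.F P C1 C2 := by
  have hterm12 : ∀ σ ∈ stab C1 C2, f.F (permSitu σ P) C1 C2 = f.F P C1 C2 := by
    intro σ hσ
    rw [mem_stab] at hσ
    have := hneu σ P C1 C2
    rwa [permComm_eq σ C1 C1 hσ.1, permComm_eq σ C2 C2 hσ.2] at this
  have hterm21 : ∀ σ ∈ stab C1 C2, f.F (permSitu σ P) C2 C1 = f.F P C2 C1 := by
    intro σ hσ
    rw [mem_stab] at hσ
    have := hneu σ P C2 C1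
    rwa [permComm_eq σ C1 C1 hσ.1, permComm_eq σ C2 C2 hσ.2] at this
  have hne : (stab C1 C2).Nonempty := ⟨1, one_mem_stab C1 C2⟩
  rcases f.mem_range P C1 C2 with h | h | h
  · -- -1
    have h' : f.F P C2 C1 = 1 := by have := f.antisymm P C1 C2; omega
    have : f.F (symP C1 C2 P) C2 C1 = 1 :=
      F_sum_one f hcons _ _ C2 C1 hne (fun σ hσ => by rw [hterm21 σ hσ]; exact h')
    have := f.antisymm (symP C1 C2 P) C1 C2
    omega
  · -- 0
    have h' : f.F P C2 C1 = 0 := by have := f.antisymm P C1 C2; omega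
    have h1 : 0 ≤ f.F (symP C1 C2 P) C1 C2 :=
      F_sum_nonneg f hcons _ _ C1 C2 hne (fun σ hσ => by rw [hterm12 σ hσ, h])
    have h2 : 0 ≤ f.F (symP C1 C2 P) C2 C1 :=
      F_sum_nonneg f hcons _ _ C2 C1 hne (fun σ hσ => by rw [hterm21 σ hσ, h'])
    have := f.antisymm (symP C1 C2 P) C1 C2
    omega
  · -- 1
    have : f.F (symP C1 C2 P) C1 C2 = 1 :=
      F_sum_one f hcons _ _ C1 C2 hne (fun σ hσ => by rw [hterm12 σ hσ]; exact h)
    omega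

lemma F_pos_invariant (f : DecisionRule A k ℕ) (hneu : f.Neutral) (hcons : f.Consistent)
    (C1 C2 : Committee A k) (x y : ℕ) (a b a' b' : Vote A)
    (ha1 : a.pos C1.1 = a'.pos C1.1) (ha2 : a.pos C2.1 = a'.pos C2.1)
    (hb1 : b.pos C1.1 = b'.pos C1.1) (hb2 : b.pos C2.1 = b'.pos C2.1) :
    f.F (x • singleSitu a + y • singleSitu b) C1 C2
      = f.F (x • singleSitu a' + y • singleSitu b') C1 C2 := by
  have hSym : symP C1 C2 (x • singleSitu a + y • singleSitu b)
      = symP C1 C2 (x • singleSitu a' + y • singleSitu b') := by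
    rw [symP_add, symP_add, symP_smul, symP_smul, symP_smul, symP_smul,
      symP_single, symP_single, symP_single C1 C2 a', symP_single C1 C2 b',
      ha1, ha2, hb1, hb2]
  rw [← F_symP f hneu hcons C1 C2, hSym, F_symP f hneu hcons C1 C2]

end Inv
section Main
variable {A : Type*} [Fintype A] [DecidableEq A]

lemma delta_reverse_of_pos {k s : ℕ}
    (f : DecisionRule A k ℕ) (hneu : f.Neutral) (hcons : f.Consistent) (hcont : f.IsContinuous)
    (C1 C2 : Committee A k)
    (w : Finset (Fin (Fintype.card A)) → Finset (Fin (Fintype.card A)) → Vote A)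
    (hw : ∀ J1 J2 : Finset (Fin (Fintype.card A)), J1.card = k → J2.card = k →
      (J1 ∩ J2).card = s → (w J1 J2).pos C1.1 = J1 ∧ (w J1 J2).pos C2.1 = J2)
    (I1s I2s : Finset (Fin (Fintype.card A)))
    (hI1s : I1s.card = k) (hI2s : I2s.card = k) (hIs : (I1s ∩ I2s).card = s)
    (hstar : f.F (singleSitu (w I1s I2s)) C1 C2 = 1)
    (I1 I2 : Finset (Fin (Fintype.card A)))
    (hI1 : I1.card = k) (hI2 : I2.card = k) (hI : (I1 ∩ I2).card = s)
    (hpos : f.F (singleSitu (w I1 I2)) C1 C2 = 1) :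
    Delta f C1 C2 w I1s I2s I2 I1 = - Delta f C1 C2 w I1s I2s I1 I2 := by
  obtain ⟨hu1, hu2⟩ := hw I1 I2 hI1 hI2 hI
  obtain ⟨hu'1, hu'2⟩ := hw I2 I1 hI2 hI1 (by rwa [Finset.inter_comm])
  obtain ⟨hv1, hv2⟩ := hw I1s I2s hI1s hI2s hIs
  obtain ⟨hv'1, hv'2⟩ := hw I2s I1s hI2s hI1s (by rwa [Finset.inter_comm])
  simp only [Vote.pos] at hu1 hu2 hu'1 hu'2 hv1 hv2 hv'1 hv'2
  -- the committee-swapping permutation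
  set σ₀ : Equiv.Perm A := (w I1 I2).trans (w I2 I1).symm with hσ₀
  have hσ1 : C1.1.image ⇑σ₀ = C2.1 := by
    have h : C1.1.image ⇑σ₀ = (C1.1.image ⇑(w I1 I2)).image ⇑(w I2 I1).symm := by
      rw [Finset.image_image]; rfl
    rw [h, hu1, image_symm_eq (w I2 I1) hu'2]
  have hσ2 : C2.1.image ⇑σ₀ = C1.1 := by
    have h : C2.1.image ⇑σ₀ = (C2.1.image ⇑(w I1 I2)).image ⇑(w I2 I1).symm := by
      rw [Finset.image_image]; rfl
    rw [h, hu2, image_symm_eq (w I2 I1) hu'1]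
  have hσ1s : C1.1.image ⇑σ₀.symm = C2.1 := image_symm_eq σ₀ hσ2
  have hσ2s : C2.1.image ⇑σ₀.symm = C1.1 := image_symm_eq σ₀ hσ1
  have hpermu : permVote σ₀ (w I1 I2) = w I2 I1 := by
    ext a
    simp [permVote, hσ₀]
  -- value at the swapped single vote
  have hswap : f.F (singleSitu (w I2 I1)) C1 C2 = f.F (singleSitu (w I1 I2)) C2 C1 := by
    have h := hneu σ₀ (singleSitu (w I1 I2)) C2 C1
    rwa [permComm_eq σ₀ C2 C1 hσ2, permComm_eq σ₀ C1 C2 hσ1, permSitu_single, hpermu] at h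
  have hneg : f.F (singleSitu (w I2 I1)) C1 C2 = -1 := by
    have ha := f.antisymm (singleSitu (w I1 I2)) C1 C2
    omega
  have hu'21 : f.F (singleSitu (w I2 I1)) C2 C1 = 1 := by
    have := f.antisymm (singleSitu (w I2 I1)) C1 C2
    omega
  -- the key reversal identity
  have hQR : ∀ x y : ℕ, f.F (x • singleSitu (w I1 I2) + y • singleSitu (w I2s I1s)) C2 C1
      = - f.F (x • singleSitu (w I2 I1) + y • singleSitu (w I1s I2s)) C2 C1 := by
    intro x y
    have h1 := hneu σ₀ (x • singleSitu (w I1 I2) + y • singleSitu (w I2s I1s)) C2 C1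
    rw [permComm_eq σ₀ C2 C1 hσ2, permComm_eq σ₀ C1 C2 hσ1] at h1
    have h2 : permSitu σ₀ (x • singleSitu (w I1 I2) + y • singleSitu (w I2s I1s))
        = x • singleSitu (w I2 I1) + y • singleSitu (permVote σ₀ (w I2s I1s)) := by
      rw [permSitu_add, permSitu_smul, permSitu_smul, permSitu_single, permSitu_single, hpermu]
    rw [h2] at h1
    have h3 : f.F (x • singleSitu (w I2 I1) + y • singleSitu (permVote σ₀ (w I2s I1s))) C1 C2
        = f.F (x • singleSitu (w I2 I1) + y • singleSitu (w I1s I2s)) C1 C2 := by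
      apply F_pos_invariant f hneu hcons C1 C2 x y
      · rfl
      · rfl
      · rw [pos_permVote]
        show Vote.pos (w I2s I1s) (C1.1.image ⇑σ₀.symm) = _
        rw [hσ1s]
        show C2.1.image ⇑(w I2s I1s) = C1.1.image ⇑(w I1s I2s)
        rw [hv'2, hv1]
      · rw [pos_permVote]
        show Vote.pos (w I2s I1s) (C2.1.image ⇑σ₀.symm) = _
        rw [hσ2s]
        show C1.1.image ⇑(w I2s I1s) = C2.1.image ⇑(w I1s I2s)
        rw [hv'1, hv2]
    rw [h3] at h1
    have ha := f.antisymm (x • singleSitu (w I2 I1) + y • singleSitu (w I1s I2s)) C1 C2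
    omega
  -- the two sets
  set S : Set ℝ := {q : ℝ | ∃ x y : ℕ, 0 < x ∧ 0 < y ∧ q = (y : ℝ) / (x : ℝ) ∧
      f.F (x • singleSitu (w I2 I1) + y • singleSitu (w I1s I2s)) C2 C1 = 1} with hSdef
  set T : Set ℝ := {q : ℝ | ∃ x y : ℕ, 0 < x ∧ 0 < y ∧ q = (y : ℝ) / (x : ℝ) ∧
      f.F (x • singleSitu (w I1 I2) + y • singleSitu (w I2s I1s)) C2 C1 = 1} with hTdef
  -- nonemptiness
  obtain ⟨n, hn⟩ := hcont (singleSitu (w I1s I2s)) (singleSitu (w I2 I1)) C2 C1 hu'21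
  have hn0 : 0 < n := by
    rcases Nat.eq_zero_or_pos n with rfl | h
    · rw [zero_smul, add_zero] at hn
      have := f.antisymm (singleSitu (w I1s I2s)) C1 C2
      omega
    · exact h
  have hSne : S.Nonempty := by
    refine ⟨((1:ℕ):ℝ)/((n:ℕ):ℝ), n, 1, hn0, Nat.one_pos, rfl, ?_⟩
    rw [one_smul, add_comm]
    exact hn
  obtain ⟨m, hm⟩ := hcont (singleSitu (w I2 I1)) (singleSitu (w I1s I2s)) C1 C2 hstar
  have hm0 : 0 < m := by
    rcases Nat.eq_zero_or_pos m with rfl | h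
    · rw [zero_smul, add_zero] at hm
      omega
    · exact h
  have hTne : T.Nonempty := by
    refine ⟨((m:ℕ):ℝ)/((1:ℕ):ℝ), 1, m, Nat.one_pos, hm0, rfl, ?_⟩
    have h1 : f.F (1 • singleSitu (w I2 I1) + m • singleSitu (w I1s I2s)) C1 C2 = 1 := by
      rwa [one_smul]
    have h2 := hQR 1 m
    have ha := f.antisymm (1 • singleSitu (w I2 I1) + m • singleSitu (w I1s I2s)) C1 C2
    omega
  -- ordering between the sets
  have hord : ∀ a ∈ S, ∀ b ∈ T, a ≤ b := by
    rintro a ⟨x, y, hx, hy, rfl, hg1⟩ b ⟨x', y', hx', hy', rfl, hb⟩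
    have hg2 : f.F (x' • singleSitu (w I2 I1) + y' • singleSitu (w I1s I2s)) C1 C2 = 1 := by
      have h1 := hQR x' y'
      have ha := f.antisymm (x' • singleSitu (w I2 I1) + y' • singleSitu (w I1s I2s)) C1 C2
      omega
    by_contra hcon
    push_neg at hcon
    have hx0 : (0:ℝ) < x := by exact_mod_cast hx
    have hx'0 : (0:ℝ) < x' := by exact_mod_cast hx'
    have hcross : y' * x < y * x' := by
      have := (div_lt_div_iff₀ hx'0 hx0).mp hcon
      exact_mod_cast this
    have hlt : x * y' < x' * y := by
      rw [Nat.mul_comm x y', Nat.mul_comm x' y]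
      exact hcross
    have hA : f.F ((x' * x) • singleSitu (w I2 I1) + (x' * y) • singleSitu (w I1s I2s)) C2 C1
        = 1 := by
      have h := F_smul_one f hcons _ C2 C1 x' hx' hg1
      rwa [smul_add, smul_smul, smul_smul] at h
    have hB : f.F ((x * x') • singleSitu (w I2 I1) + (x * y') • singleSitu (w I1s I2s)) C1 C2
        = 1 := by
      have h := F_smul_one f hcons _ C1 C2 x hx hg2
      rwa [smul_add, smul_smul, smul_smul] at h
    have hd : 0 < x' * y - x * y' := by omega
    have hdv : f.F ((x' * y - x * y') • singleSitu (w I1s I2s)) C1 C2 = 1 :=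
      F_smul_one f hcons _ C1 C2 _ hd hstar
    have hsum := (hcons _ _ C1 C2).1 hB (by rw [hdv]; norm_num)
    have heq : (x * x') • singleSitu (w I2 I1) + (x * y') • singleSitu (w I1s I2s)
          + (x' * y - x * y') • singleSitu (w I1s I2s)
        = (x' * x) • singleSitu (w I2 I1) + (x' * y) • singleSitu (w I1s I2s) := by
      rw [add_assoc, ← add_smul]
      congr 1
      · rw [Nat.mul_comm]
      · congr 1
        exact Nat.add_sub_cancel' hlt.le
    rw [heq] at hsum
    have := f.antisymm ((x' * x) • singleSitu (w I2 I1)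
      + (x' * y) • singleSitu (w I1s I2s)) C1 C2
    omega
  obtain ⟨a0, ha0⟩ := hSne
  obtain ⟨b0, hb0⟩ := hTne
  have hSbdd : BddAbove S := ⟨b0, fun a ha => hord a ha b0 hb0⟩
  have hTbdd : BddBelow T := ⟨a0, fun b hb => hord a0 ha0 b hb⟩
  have h1 : sSup S ≤ sInf T :=
    csSup_le ⟨a0, ha0⟩ (fun a ha => le_csInf ⟨b0, hb0⟩ (fun b hb => hord a ha b hb))
  have hS0 : 0 ≤ sSup S := by
    have h0 : 0 ≤ a0 := by
      obtain ⟨x, y, hx, hy, rfl, _⟩ := ha0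
      positivity
    exact le_trans h0 (le_csSup hSbdd ha0)
  -- no gap
  have h2 : sInf T ≤ sSup S := by
    by_contra hlt
    push_neg at hlt
    have hε : 0 < sInf T - sSup S := by linarith
    obtain ⟨x, hxgt⟩ := exists_nat_gt (2 / (sInf T - sSup S))
    have h2pos : 0 < 2 / (sInf T - sSup S) := by positivity
    have hx0 : (0:ℝ) < x := lt_trans h2pos hxgt
    have hxn : 0 < x := by exact_mod_cast hx0
    have h2x : 2 / (x:ℝ) < sInf T - sSup S := by
      rw [div_lt_iff₀ hx0]
      have h := (div_lt_iff₀ hε).mp hxgt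
      linarith
    set y : ℕ := ⌊(x:ℝ) * sSup S⌋₊ + 1 with hy
    have hy0 : 0 < y := Nat.succ_pos _
    clear_value y
    have hycast : (y:ℝ) = (⌊(x:ℝ) * sSup S⌋₊ : ℝ) + 1 := by rw [hy]; push_cast; ring
    have hylt : sSup S < (y:ℝ) / x := by
      rw [lt_div_iff₀ hx0]
      calc sSup S * (x:ℝ) = (x:ℝ) * sSup S := mul_comm _ _
        _ < (⌊(x:ℝ) * sSup S⌋₊ : ℝ) + 1 := Nat.lt_floor_add_one _
        _ = (y:ℝ) := hycast.symm
    have hyle : (y:ℝ) / x ≤ sSup S + 1 / x := by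
      rw [div_le_iff₀ hx0]
      have hfl : (⌊(x:ℝ) * sSup S⌋₊ : ℝ) ≤ (x:ℝ) * sSup S := Nat.floor_le (by positivity)
      calc (y:ℝ) = (⌊(x:ℝ) * sSup S⌋₊ : ℝ) + 1 := hycast
        _ ≤ (x:ℝ) * sSup S + 1 := by linarith
        _ = (sSup S + 1/x) * x := by field_simp
    have h1x2x : (1:ℝ)/x ≤ 2/x := by gcongr <;> norm_num
    have hyT : (y:ℝ)/x < sInf T := by linarith
    have hnot1 : ¬ f.F (x • singleSitu (w I2 I1) + y • singleSitu (w I1s I2s)) C2 C1 = 1 := by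
      intro h
      have hmem : (y:ℝ)/x ∈ S := ⟨x, y, hxn, hy0, rfl, h⟩
      have := le_csSup hSbdd hmem
      linarith
    have hnotm1 : ¬ f.F (x • singleSitu (w I2 I1) + y • singleSitu (w I1s I2s)) C2 C1 = -1 := by
      intro h
      have hcond : f.F (x • singleSitu (w I1 I2) + y • singleSitu (w I2s I1s)) C2 C1 = 1 := by
        have := hQR x y
        omega
      have hmem : (y:ℝ)/x ∈ T := ⟨x, y, hxn, hy0, rfl, hcond⟩
      have := csInf_le hTbdd hmem
      linarith
    have hg0 : f.F (x • singleSitu (w I2 I1) + y • singleSitu (w I1s I2s)) C2 C1 = 0 := by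
      rcases f.mem_range (x • singleSitu (w I2 I1) + y • singleSitu (w I1s I2s)) C2 C1
        with h | h | h
      · exact absurd h hnotm1
      · exact h
      · exact absurd h hnot1
    have hz : f.F (x • singleSitu (w I2 I1) + y • singleSitu (w I1s I2s)) C1 C2 = 0 := by
      have := f.antisymm (x • singleSitu (w I2 I1) + y • singleSitu (w I1s I2s)) C1 C2
      omega
    have hstep := (hcons (singleSitu (w I1s I2s))
      (x • singleSitu (w I2 I1) + y • singleSitu (w I1s I2s)) C1 C2).1 hstar (by rw [hz])
    have heq2 : singleSitu (w I1s I2s) + (x • singleSitu (w I2 I1) + y • singleSitu (w I1s I2s))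
        = x • singleSitu (w I2 I1) + (y+1) • singleSitu (w I1s I2s) := by
      rw [add_left_comm]
      congr 1
      rw [add_comm, ← succ_nsmul]
    rw [heq2] at hstep
    have hcond2 : f.F (x • singleSitu (w I1 I2) + (y+1) • singleSitu (w I2s I1s)) C2 C1 = 1 := by
      have hq := hQR x (y+1)
      have ha := f.antisymm (x • singleSitu (w I2 I1) + (y+1) • singleSitu (w I1s I2s)) C1 C2
      omega
    have hmemT : (((y:ℕ)+1:ℕ):ℝ)/x ∈ T := ⟨x, y+1, hxn, Nat.succ_pos _, rfl, hcond2⟩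
    have hinf := csInf_le hTbdd hmemT
    have hsplit : (((y:ℕ)+1:ℕ):ℝ)/x = (y:ℝ)/x + 1/x := by push_cast; ring
    have h12 : (2:ℝ)/x = 1/x + 1/x := by ring
    linarith
  have key : sInf T = sSup S := le_antisymm h2 h1
  -- assemble
  have hne1 : ¬ f.F (singleSitu (w I2 I1)) C1 C2 = 1 := by
    intro h
    rw [h] at hneg
    omega
  unfold Delta
  rw [if_neg hne1, if_pos hneg, if_pos hpos, key]

end Main
section Swap
variable {A : Type*} [Fintype A] [DecidableEq A] {k : ℕ}

lemma F_single_swap (f : DecisionRule A k ℕ) (hneu : f.Neutral) (C1 C2 : Committee A k)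
    (u u' : Vote A) (h1 : u'.pos C1.1 = u.pos C2.1) (h2 : u'.pos C2.1 = u.pos C1.1) :
    f.F (singleSitu u') C1 C2 = f.F (singleSitu u) C2 C1 := by
  set σ₀ : Equiv.Perm A := u.trans u'.symm with hσ₀
  simp only [Vote.pos] at h1 h2
  have hσ1 : C1.1.image ⇑σ₀ = C2.1 := by
    have h : C1.1.image ⇑σ₀ = (C1.1.image ⇑u).image ⇑u'.symm := by
      rw [Finset.image_image]; rfl
    rw [h, ← h2, image_symm_eq u' rfl]
  have hσ2 : C2.1.image ⇑σ₀ = C1.1 := by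
    have h : C2.1.image ⇑σ₀ = (C2.1.image ⇑u).image ⇑u'.symm := by
      rw [Finset.image_image]; rfl
    rw [h, ← h1, image_symm_eq u' rfl]
  have hpermu : permVote σ₀ u = u' := by
    ext a
    simp [permVote, hσ₀]
  have h := hneu σ₀ (singleSitu u) C2 C1
  rwa [permComm_eq σ₀ C2 C1 hσ2, permComm_eq σ₀ C1 C2 hσ1, permSitu_single, hpermu] at h

end Swap
/-- **Lemma 2.** In the Δ-setup, `Δ_{I2,I1} = -Δ_{I1,I2}` for all committee positions
`I1, I2` whose intersection has `s` elements. -/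
theorem delta_reverse {A : Type*} [Fintype A] [DecidableEq A] {k s : ℕ}
    (hk : k ≤ Fintype.card A) (hs : s < k)
    (f : DecisionRule A k ℕ) (hneu : f.Neutral) (hcons : f.Consistent) (hcont : f.IsContinuous)
    (C1 C2 : Committee A k) (hC : (C1.1 ∩ C2.1).card = s)
    (w : Finset (Fin (Fintype.card A)) → Finset (Fin (Fintype.card A)) → Vote A)
    (hw : ∀ J1 J2 : Finset (Fin (Fintype.card A)), J1.card = k → J2.card = k →
      (J1 ∩ J2).card = s → (w J1 J2).pos C1.1 = J1 ∧ (w J1 J2).pos C2.1 = J2)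
    (I1s I2s : Finset (Fin (Fintype.card A)))
    (hI1s : I1s.card = k) (hI2s : I2s.card = k) (hIs : (I1s ∩ I2s).card = s)
    (hstar : f.F (singleSitu (w I1s I2s)) C1 C2 = 1)
    (I1 I2 : Finset (Fin (Fintype.card A)))
    (hI1 : I1.card = k) (hI2 : I2.card = k) (hI : (I1 ∩ I2).card = s) :
    Delta f C1 C2 w I1s I2s I2 I1 = - Delta f C1 C2 w I1s I2s I1 I2 := by
  have hI' : (I2 ∩ I1).card = s := by rwa [Finset.inter_comm]
  obtain ⟨hu1, hu2⟩ := hw I1 I2 hI1 hI2 hI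
  obtain ⟨hu'1, hu'2⟩ := hw I2 I1 hI2 hI1 hI'
  have hswap := F_single_swap f hneu C1 C2 (w I1 I2) (w I2 I1)
    (by rw [hu'1, hu2]) (by rw [hu'2, hu1])
  rcases f.mem_range (singleSitu (w I1 I2)) C1 C2 with h | h | h
  · -- C2 beats C1 at w I1 I2 : apply the main lemma with I1 and I2 interchanged
    have hpos2 : f.F (singleSitu (w I2 I1)) C1 C2 = 1 := by
      have := f.antisymm (singleSitu (w I1 I2)) C1 C2
      omega
    have hmain := delta_reverse_of_pos f hneu hcons hcont C1 C2 w hw I1s I2s hI1s hI2s hIs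
      hstar I2 I1 hI2 hI1 hI' hpos2
    linarith
  · -- tie
    have h2 : f.F (singleSitu (w I2 I1)) C1 C2 = 0 := by
      have := f.antisymm (singleSitu (w I1 I2)) C1 C2
      omega
    unfold Delta
    rw [if_neg (by rw [h2]; decide), if_neg (by rw [h2]; decide),
      if_neg (by rw [h]; decide), if_neg (by rw [h]; decide)]
    norm_num
  · exact delta_reverse_of_pos f hneu hcons hcont C1 C2 w hw I1s I2s hI1s hI2s hIs
      hstar I1 I2 hI1 hI2 hI h
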